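/- Soundness of the returned lower bound: let φ : [a, b] → ℝ be Lipschitz, let a = a₀ < a₁ < ⋯ < a_{n+1} = b be a partition, and suppose for each i the constant lᵢ is a valid Lipschitz constant for φ on [aᵢ, a_{i+1}]. Define Rᵢ = (φ(aᵢ) + φ(a_{i+1}))/2 + lᵢ·(aᵢ − a_{i+1})/2 and R_min = min_i Rᵢ. Then R_min ≤ min_{x ∈ [a, b]} φ(x). -/

import Mathlib

/-- Soundness of the returned lower bound `R_min = min_i R_i` over a
partition `a 0 < ⋯ < a (n+1)` of the domain. -/
theorem Rmin_le_min (φ : ℝ → ℝ) (n : ℕ) (a : Fin (n + 2) → ℝ)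
    (hmono : StrictMono a)
    (l : Fin (n + 1) → ℝ) (hl : ∀ i, 0 ≤ l i)
    (hlip : ∀ i : Fin (n + 1), ∀ x ∈ Set.Icc (a i.castSucc) (a i.succ),
      ∀ y ∈ Set.Icc (a i.castSucc) (a i.succ), |φ x - φ y| ≤ l i * |x - y|) :
    ∀ x ∈ Set.Icc (a 0) (a (Fin.last (n + 1))),
      Finset.univ.inf' Finset.univ_nonempty
        (fun i : Fin (n + 1) =>
          (φ (a i.castSucc) + φ (a i.succ)) / 2 +
            l i * (a i.castSucc - a i.succ) / 2) ≤ φ x := by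
  intro x hx
  obtain ⟨hx0, hx1⟩ := hx
  -- find the interval containing x
  have hex : ∃ i : Fin (n + 1), x ∈ Set.Icc (a i.castSucc) (a i.succ) := by
    classical
    set S : Finset (Fin (n + 1)) := Finset.univ.filter (fun i => a i.castSucc ≤ x) with hS
    have h0S : (0 : Fin (n + 1)) ∈ S := by
      simp only [hS, Finset.mem_filter, Finset.mem_univ, true_and]
      simpa using hx0
    have hSne : S.Nonempty := ⟨0, h0S⟩
    obtain ⟨i, hiS, hmax⟩ := S.exists_max_image id hSne
    have hle : a i.castSucc ≤ x := by
      simpa [hS, Finset.mem_filter] using hiS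
    refine ⟨i, hle, ?_⟩
    by_contra hcon
    push_neg at hcon
    -- x > a i.succ
    by_cases hlast : i = Fin.last n
    · have : a i.succ = a (Fin.last (n + 1)) := by
        rw [hlast]; rfl
      rw [this] at hcon
      exact absurd hx1 (not_le.mpr hcon)
    · obtain ⟨j, hj⟩ : ∃ j : Fin (n + 1), j = i + 1 := ⟨i + 1, rfl⟩
      have hilt : (i : ℕ) < n := by
        have := Fin.lt_last_iff_ne_last.mpr hlast
        exact this
      have hjval : (j : ℕ) = (i : ℕ) + 1 := by
        rw [hj]
        simp [Fin.add_def, Nat.mod_eq_of_lt (by omega : (i : ℕ) + 1 < n + 1)]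
      have hjc : a j.castSucc = a i.succ := by
        congr 1
        apply Fin.ext
        simp [hjval]
      have hjS : j ∈ S := by
        simp only [hS, Finset.mem_filter, Finset.mem_univ, true_and]
        rw [hjc]
        exact le_of_lt hcon
      have := hmax j hjS
      simp only [id] at this
      have : (j : ℕ) ≤ (i : ℕ) := this
      omega
  obtain ⟨i, hxi⟩ := hex
  have hci : a i.castSucc ∈ Set.Icc (a i.castSucc) (a i.succ) := by
    refine ⟨le_refl _, le_of_lt (hmono ?_)⟩
    exact Fin.castSucc_lt_succ
  have hsi : a i.succ ∈ Set.Icc (a i.castSucc) (a i.succ) := by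
    refine ⟨le_of_lt (hmono ?_), le_refl _⟩
    exact Fin.castSucc_lt_succ
  have h1 := hlip i (a i.castSucc) hci x hxi
  have h2 := hlip i (a i.succ) hsi x hxi
  obtain ⟨hxl, hxr⟩ := hxi
  have e1 : |a i.castSucc - x| = x - a i.castSucc := by
    rw [abs_sub_comm, abs_of_nonneg (by linarith)]
  have e2 : |a i.succ - x| = a i.succ - x := by
    rw [abs_of_nonneg (by linarith)]
  rw [e1] at h1
  rw [e2] at h2
  have h1' : φ (a i.castSucc) - φ x ≤ l i * (x - a i.castSucc) :=
    le_trans (le_abs_self _) h1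
  have h2' : φ (a i.succ) - φ x ≤ l i * (a i.succ - x) :=
    le_trans (le_abs_self _) h2
  have hRi : (φ (a i.castSucc) + φ (a i.succ)) / 2 +
      l i * (a i.castSucc - a i.succ) / 2 ≤ φ x := by nlinarith
  exact le_trans (Finset.inf'_le _ (Finset.mem_univ i)) hRi
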